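/- Let R be a discrete valuation ring with fraction field K and residue field k. Let x, y, x′, y′ ∈ K[X] satisfy x y′ − x′ y = 1. Suppose c, c′ ∈ K are nonzero scalars such that cx, cy, c′x′, c′y′ all lie in R[X], with reductions x̄, ȳ, x̄′, ȳ′ satisfying ȳ ≠ 0 and ȳ′ ≠ 0, and suppose that x̄/ȳ ≠ x̄′/ȳ′ as elements of the rational function field k(X). Then cc′ lies in R and is a unit of R, and x̄ȳ′ − x̄′ȳ equals the reduction of cc′, a nonzero constant of k. -/

import Mathlib

open Polynomial

theorem reduction_of_unimodular_pair
    {R : Type*} [CommRing R] [IsDomain R] [IsDiscreteValuationRing R]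
    {K : Type*} [Field K] [Algebra R K] [IsFractionRing R K]
    (x y x' y' : K[X]) (huni : x * y' - x' * y = 1)
    (c c' : K) (hc : c ≠ 0) (hc' : c' ≠ 0)
    (P Q P' Q' : R[X])
    (hP : P.map (algebraMap R K) = Polynomial.C c * x)
    (hQ : Q.map (algebraMap R K) = Polynomial.C c * y)
    (hP' : P'.map (algebraMap R K) = Polynomial.C c' * x')
    (hQ' : Q'.map (algebraMap R K) = Polynomial.C c' * y')
    (hQne : Q.map (IsLocalRing.residue R) ≠ 0)
    (hQ'ne : Q'.map (IsLocalRing.residue R) ≠ 0)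
    (hdiff :
      (algebraMap (IsLocalRing.ResidueField R)[X]
            (RatFunc (IsLocalRing.ResidueField R)) (P.map (IsLocalRing.residue R))) /
          (algebraMap (IsLocalRing.ResidueField R)[X]
            (RatFunc (IsLocalRing.ResidueField R)) (Q.map (IsLocalRing.residue R))) ≠
        (algebraMap (IsLocalRing.ResidueField R)[X]
            (RatFunc (IsLocalRing.ResidueField R)) (P'.map (IsLocalRing.residue R))) /
          (algebraMap (IsLocalRing.ResidueField R)[X]
            (RatFunc (IsLocalRing.ResidueField R)) (Q'.map (IsLocalRing.residue R)))) :
    ∃ r : R, IsUnit r ∧ algebraMap R K r = c * c' ∧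
      IsLocalRing.residue R r ≠ 0 ∧
      P.map (IsLocalRing.residue R) * Q'.map (IsLocalRing.residue R) -
          P'.map (IsLocalRing.residue R) * Q.map (IsLocalRing.residue R) =
        Polynomial.C (IsLocalRing.residue R r) := by
  set f : R[X] := P * Q' - P' * Q with hf
  have hinj : Function.Injective (algebraMap R K) := IsFractionRing.injective R K
  have hmapf : f.map (algebraMap R K) = Polynomial.C (c * c') := by
    have : f.map (algebraMap R K) =
        P.map (algebraMap R K) * Q'.map (algebraMap R K) -
        P'.map (algebraMap R K) * Q.map (algebraMap R K) := by
      simp [hf, Polynomial.map_sub, Polynomial.map_mul]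
    rw [this, hP, hQ, hP', hQ']
    calc Polynomial.C c * x * (Polynomial.C c' * y') - Polynomial.C c' * x' * (Polynomial.C c * y)
        = Polynomial.C c * Polynomial.C c' * (x * y' - x' * y) := by ring
      _ = Polynomial.C (c * c') := by rw [huni, Polynomial.C_mul]; ring
  have hdeg : f.degree ≤ 0 := by
    have := Polynomial.degree_map_eq_of_injective hinj f
    rw [hmapf] at this
    rw [← this]
    exact Polynomial.degree_C_le
  have hfC : f = Polynomial.C (f.coeff 0) := Polynomial.eq_C_of_degree_le_zero hdeg
  set r := f.coeff 0 with hr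
  have halg : algebraMap R K r = c * c' := by
    have := congrArg (fun p => Polynomial.coeff p 0) hmapf
    simpa [Polynomial.coeff_map] using this
  have hres : P.map (IsLocalRing.residue R) * Q'.map (IsLocalRing.residue R) -
      P'.map (IsLocalRing.residue R) * Q.map (IsLocalRing.residue R) =
      Polynomial.C (IsLocalRing.residue R r) := by
    have := congrArg (fun p => p.map (IsLocalRing.residue R)) hfC
    simpa [hf, Polynomial.map_sub, Polynomial.map_mul] using this
  have hrne : IsLocalRing.residue R r ≠ 0 := by
    intro h0
    apply hdiff
    have hQim : (algebraMap (IsLocalRing.ResidueField R)[X]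
        (RatFunc (IsLocalRing.ResidueField R)) (Q.map (IsLocalRing.residue R))) ≠ 0 := by
      simpa using (RatFunc.algebraMap_ne_zero hQne)
    have hQ'im : (algebraMap (IsLocalRing.ResidueField R)[X]
        (RatFunc (IsLocalRing.ResidueField R)) (Q'.map (IsLocalRing.residue R))) ≠ 0 := by
      simpa using (RatFunc.algebraMap_ne_zero hQ'ne)
    rw [div_eq_div_iff hQim hQ'im]
    rw [← map_mul, ← map_mul]
    congr 1
    have : P.map (IsLocalRing.residue R) * Q'.map (IsLocalRing.residue R) -
        P'.map (IsLocalRing.residue R) * Q.map (IsLocalRing.residue R) = 0 := by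
      rw [hres, h0, Polynomial.C_0]
    linear_combination this
  refine ⟨r, ?_, halg, hrne, hres⟩
  by_contra hu
  exact hrne (Ideal.Quotient.eq_zero_iff_mem.2 ((IsLocalRing.mem_maximalIdeal r).2 hu))
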